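/- Let $G$ be bounded with support in $[A,B]$, $\int G=1$, and $\int u^jG(u)\,du = 0$ for $j=1,\dots,k$. Let $J$ be $k$-times differentiable on $[0,T]$ with $J^{(k)}$ Lipschitz with constant $L_1$. Fix $t$ and $\varphi>0$ with $[t+\varphi A,t+\varphi B]\subset[0,T]$. Then $\big|\int G(u)\big(J(t+\varphi u)-J(t)\big)\,du\big|^2 \le \frac{L_1^2(B-A)}{(k!)^2}\,\varphi^{2(k+1)}\int G^2(u)u^{2(k+1)}\,du$. -/

import Mathlib

open Set MeasureTheory intervalIntegral

lemma poly_hasDerivAt (c : ℕ → ℝ) (n : ℕ) (t x : ℝ) :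
    HasDerivAt (fun y => ∑ i ∈ Finset.range (n+1), c i * (y - t)^i / (Nat.factorial i))
      (∑ i ∈ Finset.range n, c (i+1) * (x - t)^i / (Nat.factorial i)) x := by
  have h : ∀ i : ℕ, HasDerivAt (fun y => c i * (y - t)^i / (Nat.factorial i))
      (c i * (i * (x - t)^(i-1)) / (Nat.factorial i)) x := by
    intro i
    have : HasDerivAt (fun y : ℝ => (y - t)^i) ((i:ℝ) * (x - t)^(i-1) * 1) x :=
      ((hasDerivAt_id x).sub_const t).pow i
    simpa [mul_comm, mul_assoc] using (this.const_mul (c i)).div_const (Nat.factorial i)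
  have hsum : HasDerivAt (fun y => ∑ i ∈ Finset.range (n+1), c i * (y - t)^i / (Nat.factorial i))
      (∑ i ∈ Finset.range (n+1), c i * (i * (x - t)^(i-1)) / (Nat.factorial i)) x :=
    HasDerivAt.fun_sum (fun i _ => h i)
  convert hsum using 1
  rw [Finset.sum_range_succ']
  simp only [Nat.factorial_succ]
  push_cast
  simp only [Nat.cast_zero, zero_mul, mul_zero, zero_div, add_zero]
  refine (Finset.sum_congr rfl fun i _ => ?_).symm
  have hfac : ((Nat.factorial i : ℝ)) ≠ 0 := by positivity
  have h1 : ((i:ℝ) + 1) ≠ 0 := by positivity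
  field_simp

lemma deriv_pow_bound {g g' : ℝ → ℝ} {a b t C : ℝ} {n : ℕ} (ht : t ∈ Icc a b)
    (hg : ∀ y ∈ Icc a b, HasDerivAt g (g' y) y) (hgc : ContinuousOn g' (Icc a b))
    (hb : ∀ y ∈ Icc a b, |g' y| ≤ C * |y - t|^n) (hgt : g t = 0) (hC : 0 ≤ C) :
    ∀ x ∈ Icc a b, |g x| ≤ C * |x - t|^(n+1) / (n+1) := by
  intro x hx
  have hsub : uIcc t x ⊆ Icc a b := uIcc_subset_Icc ht hx
  have hint : IntervalIntegrable g' volume t x :=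
    (hgc.mono hsub).intervalIntegrable
  have hftc : ∫ y in t..x, g' y = g x - g t :=
    integral_eq_sub_of_hasDerivAt (fun y hy => hg y (hsub hy)) hint
  rw [hgt, sub_zero] at hftc
  rw [← hftc]
  rcases le_total t x with hle | hle
  · have hmono : (∫ y in t..x, |g' y|) ≤ ∫ y in t..x, C * (y - t)^n := by
      refine integral_mono_on hle hint.abs ?_ ?_
      · exact (Continuous.intervalIntegrable (by continuity) t x)
      · intro y hy
        have hy' : t ≤ y := hy.1
        calc |g' y| ≤ C * |y - t|^n := hb y (hsub (by simp [uIcc_of_le hle]; exact ⟨hy.1, hy.2⟩))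
        _ = C * (y - t)^n := by rw [abs_of_nonneg (by linarith)]
    have hval : (∫ y in t..x, C * (y - t)^n) = C * (x - t)^(n+1) / (n+1) := by
      rw [intervalIntegral.integral_const_mul]
      have := integral_comp_sub_right (fun y : ℝ => y^n) t (a := t) (b := x)
      rw [this, sub_self, integral_pow]
      push_cast; ring
    calc |∫ y in t..x, g' y| ≤ ∫ y in t..x, |g' y| := abs_integral_le_integral_abs hle
      _ ≤ C * (x - t)^(n+1) / (n+1) := by rw [← hval]; exact hmono
      _ = C * |x - t|^(n+1) / (n+1) := by rw [abs_of_nonneg (by linarith)]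
  · have hint' : IntervalIntegrable g' volume x t := hint.symm
    have hmono : (∫ y in x..t, |g' y|) ≤ ∫ y in x..t, C * (t - y)^n := by
      refine integral_mono_on hle hint'.abs ?_ ?_
      · exact (Continuous.intervalIntegrable (by continuity) x t)
      · intro y hy
        calc |g' y| ≤ C * |y - t|^n := hb y (hsub (by simp [uIcc_of_ge hle]; exact ⟨hy.1, hy.2⟩))
        _ = C * (t - y)^n := by rw [abs_sub_comm, abs_of_nonneg (by linarith [hy.2])]
    have hval : (∫ y in x..t, C * (t - y)^n) = C * (t - x)^(n+1) / (n+1) := by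
      rw [intervalIntegral.integral_const_mul]
      have := integral_comp_sub_left (fun y : ℝ => y^n) t (a := x) (b := t)
      rw [this, sub_self, integral_pow]
      push_cast; ring
    have h1 : |∫ y in t..x, g' y| = |∫ y in x..t, g' y| := by
      rw [integral_symm, abs_neg]
    calc |∫ y in t..x, g' y| = |∫ y in x..t, g' y| := h1
      _ ≤ ∫ y in x..t, |g' y| := abs_integral_le_integral_abs hle
      _ ≤ C * (t - x)^(n+1) / (n+1) := by rw [← hval]; exact hmono
      _ = C * |x - t|^(n+1) / (n+1) := by rw [abs_sub_comm, abs_of_nonneg (by linarith)]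

lemma taylor_lip_bound : ∀ (k : ℕ) (f : ℝ → ℝ) (a b t L : ℝ), 0 ≤ L → t ∈ Icc a b →
    (∀ i < k, ∀ s ∈ Icc a b, HasDerivAt (iteratedDeriv i f) (iteratedDeriv (i+1) f s) s) →
    (∀ y ∈ Icc a b, ∀ z ∈ Icc a b, |iteratedDeriv k f y - iteratedDeriv k f z| ≤ L * |y - z|) →
    ∀ x ∈ Icc a b,
      |f x - ∑ i ∈ Finset.range (k+1), iteratedDeriv i f t * (x - t)^i / (Nat.factorial i)| ≤
        L * |x - t|^(k+1) / (Nat.factorial k) := by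
  intro k
  induction k with
  | zero =>
    intro f a b t L hL ht _ hlip x hx
    simpa [iteratedDeriv_zero] using hlip x hx t ht
  | succ k IH =>
    intro f a b t L hL ht hdiff hlip x hx
    set f₁ := deriv f with hf₁
    have hiter : ∀ i : ℕ, iteratedDeriv i f₁ = iteratedDeriv (i+1) f := by
      intro i
      rw [iteratedDeriv_succ']
    have hIH : ∀ x ∈ Icc a b,
        |f₁ x - ∑ i ∈ Finset.range (k+1), iteratedDeriv (i+1) f t * (x - t)^i / (Nat.factorial i)| ≤
          L * |x - t|^(k+1) / (Nat.factorial k) := by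
      have := IH f₁ a b t L hL ht
        (fun i hi s hs => by rw [hiter i, hiter (i+1)]; exact hdiff (i+1) (by omega) s hs)
        (fun y hy z hz => by rw [hiter k]; exact hlip y hy z hz)
      simpa only [hiter] using this
    -- continuity of f₁ on Icc a b
    have hf₁cont : ContinuousOn f₁ (Icc a b) := by
      rcases Nat.eq_zero_or_pos k with hk0 | hkpos
      · subst hk0
        have hlw : LipschitzOnWith L.toNNReal (iteratedDeriv 1 f) (Icc a b) :=
          LipschitzOnWith.of_dist_le_mul (fun y hy z hz => by
            rw [Real.dist_eq, Real.dist_eq, Real.coe_toNNReal _ hL]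
            exact hlip y hy z hz)
        have := hlw.continuousOn
        rwa [iteratedDeriv_one] at this
      · have hca : ContinuousOn (iteratedDeriv 1 f) (Icc a b) := fun y hy =>
          ((hdiff 1 (by omega) y hy).continuousAt).continuousWithinAt
        rwa [iteratedDeriv_one] at hca
    set c : ℕ → ℝ := fun i => iteratedDeriv i f t with hc
    set g : ℝ → ℝ := fun y =>
      f y - ∑ i ∈ Finset.range (k+2), c i * (y - t)^i / (Nat.factorial i) with hgdef
    set g' : ℝ → ℝ := fun y =>
      f₁ y - ∑ i ∈ Finset.range (k+1), c (i+1) * (y - t)^i / (Nat.factorial i) with hg'def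
    have hgderiv : ∀ y ∈ Icc a b, HasDerivAt g (g' y) y := by
      intro y hy
      have h0 := hdiff 0 (by omega) y hy
      rw [iteratedDeriv_zero] at h0
      have h0' : HasDerivAt f (f₁ y) y := by
        have : iteratedDeriv (0+1) f y = f₁ y := by
          rw [hf₁, ← iteratedDeriv_one]
        rwa [this] at h0
      exact h0'.sub (poly_hasDerivAt c (k+1) t y)
    have hgc : ContinuousOn g' (Icc a b) := by
      apply hf₁cont.sub
      apply Continuous.continuousOn
      exact continuous_finset_sum _ (fun i _ =>
        (continuous_const.mul ((continuous_id.sub continuous_const).pow i)).div_const _)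
    have hb : ∀ y ∈ Icc a b, |g' y| ≤ (L / (Nat.factorial k)) * |y - t|^(k+1) := by
      intro y hy
      have := hIH y hy
      rw [hg'def]
      simp only
      calc |f₁ y - ∑ i ∈ Finset.range (k+1), c (i+1) * (y - t)^i / (Nat.factorial i)| ≤
          L * |y - t|^(k+1) / (Nat.factorial k) := this
        _ = (L / (Nat.factorial k)) * |y - t|^(k+1) := by ring
    have hgt : g t = 0 := by
      rw [hgdef]
      simp only
      have : ∑ i ∈ Finset.range (k+2), c i * (t - t)^i / (Nat.factorial i) = c 0 := by
        rw [Finset.sum_eq_single 0]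
        · simp
        · intro i _ hi
          rcases Nat.exists_eq_succ_of_ne_zero hi with ⟨m, rfl⟩
          simp
        · intro h; simp at h
      rw [this, hc]
      simp [iteratedDeriv_zero]
    have hCpos : 0 ≤ L / (Nat.factorial k) := by positivity
    have hres := deriv_pow_bound ht hgderiv hgc hb hgt hCpos x hx
    have hgx : g x = f x - ∑ i ∈ Finset.range (k+1+1), iteratedDeriv i f t * (x - t)^i / (Nat.factorial i) := by
      rw [hgdef]
    rw [← hgx]
    refine hres.trans ?_
    set X := |x - t| ^ (k+1+1) with hXdef
    have hX : (0:ℝ) ≤ X := by rw [hXdef]; positivity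
    have hfk : (0:ℝ) < (Nat.factorial k) := by positivity
    have hfs : ((Nat.factorial (k+1) : ℕ) : ℝ) = ((k:ℝ)+1) * (Nat.factorial k) := by
      rw [Nat.factorial_succ]; push_cast; ring
    rw [hfs]
    have e1' : L / (Nat.factorial k) * X / (((k+1:ℕ):ℝ)+1) = L * X / ((Nat.factorial k) * ((k:ℝ)+1+1)) := by
      push_cast
      rw [div_mul_eq_mul_div, div_div]
    rw [e1']
    exact div_le_div_of_nonneg_left (mul_nonneg hL hX) (by positivity) (by nlinarith)

set_option maxHeartbeats 1000000 in
theorem kernel_bias_squared (A B T L1 t φ : ℝ) (hA : A < 0) (hB : 0 < B) (hL1 : 0 < L1)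
    (hφ : 0 < φ) (ht : t ∈ Set.Ioo (0:ℝ) T) (k : ℕ) (hk : 1 ≤ k)
    (hsub : Set.Icc (t + φ * A) (t + φ * B) ⊆ Set.Icc 0 T)
    (G : ℝ → ℝ) (hG_meas : Measurable G) (hG_bdd : ∃ M, ∀ u, |G u| ≤ M)
    (hG_supp : ∀ u, u ∉ Set.Icc A B → G u = 0)
    (hG_int : ∫ u, G u = 1)
    (hG_mom : ∀ j : ℕ, 1 ≤ j → j ≤ k → ∫ u, u ^ j * G u = 0)
    (J : ℝ → ℝ)
    (hJ_diff : ∀ s ∈ Set.Icc (0:ℝ) T, ∀ i < k, HasDerivAt (iteratedDeriv i J) (iteratedDeriv (i + 1) J s) s)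
    (hJ_lip : LipschitzOnWith (Real.toNNReal L1) (iteratedDeriv k J) (Set.Icc 0 T)) :
    |∫ u, G u * (J (t + φ * u) - J t)| ^ 2 ≤
      L1 ^ 2 * (B - A) / (Nat.factorial k) ^ 2 * φ ^ (2 * (k + 1)) *
        ∫ u, G u ^ 2 * u ^ (2 * (k + 1)) := by
  obtain ⟨M, hM⟩ := hG_bdd
  have hM0 : 0 ≤ M := (abs_nonneg _).trans (hM 0)
  set a := t + φ * A with ha
  set b := t + φ * B with hb
  have hab : a < b := by simp only [ha, hb]; nlinarith
  have ht' : t ∈ Icc a b := ⟨by nlinarith, by nlinarith⟩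
  set c : ℕ → ℝ := fun i => iteratedDeriv i J t with hc
  set K := L1 * φ^(k+1) / (Nat.factorial k) with hK
  have hK0 : 0 ≤ K := by positivity
  set r : ℝ → ℝ := fun u => J (t + φ*u) - ∑ i ∈ Finset.range (k+1), c i * (φ*u)^i / (Nat.factorial i) with hr
  -- Taylor bound
  have htay := taylor_lip_bound k J a b t L1 hL1.le ht'
    (fun i hi s hs => hJ_diff s (hsub hs) i hi)
    (fun y hy z hz => by
      have := hJ_lip.dist_le_mul y (hsub hy) z (hsub hz)
      rwa [Real.dist_eq, Real.dist_eq, Real.coe_toNNReal _ hL1.le] at this)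
  have hmem : ∀ u ∈ Icc A B, t + φ*u ∈ Icc a b := by
    intro u hu
    constructor
    · simp only [ha]; nlinarith [hu.1]
    · simp only [hb]; nlinarith [hu.2]
  have hrb : ∀ u ∈ Icc A B, |r u| ≤ K * |u|^(k+1) := by
    intro u hu
    have h1 := htay (t + φ*u) (hmem u hu)
    rw [show t + φ*u - t = φ*u by ring] at h1
    rw [hr]
    simp only
    refine h1.trans_eq ?_
    rw [abs_mul, abs_of_pos hφ, mul_pow, hK]
    ring
  -- bounds on Icc A B
  set D := (|A| + |B|)^(k+1) with hD
  have hD0 : 0 ≤ D := by positivity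
  have huB : ∀ u ∈ Icc A B, |u| ≤ |A| + |B| := by
    intro u hu
    rw [abs_le]
    constructor
    · have : -|A| ≤ A := neg_abs_le A
      have : B ≤ |B| := le_abs_self B
      cases' abs_cases A with h h <;> cases' abs_cases B with h' h' <;>
        [skip; skip; skip; skip] <;> nlinarith [hu.1, hu.2]
    · cases' abs_cases A with h h <;> cases' abs_cases B with h' h' <;> nlinarith [hu.1, hu.2]
  have huD : ∀ u ∈ Icc A B, |u|^(k+1) ≤ D := by
    intro u hu
    exact pow_le_pow_left₀ (abs_nonneg u) (huB u hu) (k+1)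
  -- measure setup
  have hs : MeasurableSet (Icc A B) := measurableSet_Icc
  haveI : IsFiniteMeasure (volume.restrict (Icc A B)) :=
    ⟨by rw [Measure.restrict_apply_univ]; exact measure_Icc_lt_top⟩
  -- continuity of r on Icc A B
  have hrcont : ContinuousOn r (Icc A B) := by
    intro u hu
    apply ContinuousAt.continuousWithinAt
    apply ContinuousAt.sub
    · have h0 := hJ_diff (t + φ*u) (hsub (hmem u hu)) 0 hk
      rw [iteratedDeriv_zero] at h0
      have hcont2 : ContinuousAt (fun x : ℝ => t + φ * x) u := by fun_prop
      exact ContinuousAt.comp (g := J) (f := fun x : ℝ => t + φ * x) h0.continuousAt hcont2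
    · exact (continuous_finset_sum _ (fun i _ =>
        (continuous_const.mul ((continuous_const.mul continuous_id).pow i)).div_const _)).continuousAt
  have hr_meas : AEMeasurable r (volume.restrict (Icc A B)) := hrcont.aemeasurable hs
  -- integrability helper
  have hint_of : ∀ (f : ℝ → ℝ), AEStronglyMeasurable f (volume.restrict (Icc A B)) →
      ∀ C : ℝ, (∀ u ∈ Icc A B, |f u| ≤ C) → Integrable f (volume.restrict (Icc A B)) := by
    intro f hf C hC
    refine Integrable.mono' (integrable_const C) hf ?_
    exact ae_restrict_of_forall_mem hs (fun u hu => by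
      simpa [Real.norm_eq_abs] using hC u hu)
  have I1 : Integrable (fun u => G u * r u) (volume.restrict (Icc A B)) := by
    refine hint_of _ ((hG_meas.aemeasurable.mul hr_meas).aestronglyMeasurable) (M * (K * D)) ?_
    intro u hu
    rw [abs_mul]
    exact mul_le_mul (hM u) ((hrb u hu).trans (by nlinarith [huD u hu])) (abs_nonneg _) hM0
  have I2 : ∀ i : ℕ, Integrable (fun u => u^(i+1) * G u) (volume.restrict (Icc A B)) := by
    intro i
    refine hint_of _ ((measurable_id.pow_const (i+1)).mul hG_meas).aestronglyMeasurable
      ((|A| + |B|)^(i+1) * M) ?_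
    intro u hu
    rw [abs_mul, abs_pow]
    exact mul_le_mul (pow_le_pow_left₀ (abs_nonneg u) (huB u hu) (i+1)) (hM u) (abs_nonneg _)
      (by positivity)
  have I3 : Integrable (fun u => |G u| * |u|^(k+1)) (volume.restrict (Icc A B)) := by
    refine hint_of _ ((hG_meas.abs.mul ((measurable_id.abs.pow_const (k+1)))).aestronglyMeasurable)
      (M * D) ?_
    intro u hu
    rw [abs_mul, abs_abs, abs_pow, abs_abs]
    exact mul_le_mul (hM u) (huD u hu) (by positivity) hM0
  -- Step A : reduce to ∫_s G r
  have hA1 : ∫ u, G u * (J (t + φ * u) - J t) = ∫ u in Icc A B, G u * (J (t + φ*u) - J t) :=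
    (setIntegral_eq_integral_of_forall_compl_eq_zero (fun u hu => by rw [hG_supp u hu]; ring)).symm
  have hc0 : c 0 = J t := by rw [hc]; simp [iteratedDeriv_zero]
  have hpt : ∀ u : ℝ, G u * (J (t + φ*u) - J t) =
      G u * r u + ∑ i ∈ Finset.range k,
        (c (i+1) * φ^(i+1) / (Nat.factorial (i+1))) * (u^(i+1) * G u) := by
    intro u
    rw [hr]
    simp only
    rw [Finset.sum_range_succ']
    simp only [pow_zero, mul_one, Nat.factorial_zero, Nat.cast_one, div_one, hc0]
    have hterm : ∀ i ∈ Finset.range k,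
        (c (i+1) * φ^(i+1) / (Nat.factorial (i+1))) * (u^(i+1) * G u) =
          G u * (c (i+1) * (φ*u)^(i+1) / (Nat.factorial (i+1))) := by
      intro i _
      rw [mul_pow]
      ring
    rw [Finset.sum_congr rfl hterm, ← Finset.mul_sum]
    ring
  have Isum : Integrable (fun u => ∑ i ∈ Finset.range k,
      (c (i+1) * φ^(i+1) / (Nat.factorial (i+1))) * (u^(i+1) * G u))
      (volume.restrict (Icc A B)) :=
    integrable_finset_sum _ (fun i _ => (I2 i).const_mul _)
  have hzero : ∀ i ∈ Finset.range k, ∫ u in Icc A B, u^(i+1) * G u = 0 := by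
    intro i hi
    rw [setIntegral_eq_integral_of_forall_compl_eq_zero
      (fun u hu => by rw [hG_supp u hu]; ring)]
    exact hG_mom (i+1) (by omega) (by have := Finset.mem_range.mp hi; omega)
  have hA2 : ∫ u in Icc A B, G u * (J (t + φ*u) - J t) = ∫ u in Icc A B, G u * r u := by
    calc ∫ u in Icc A B, G u * (J (t + φ*u) - J t)
        = ∫ u in Icc A B, (G u * r u + ∑ i ∈ Finset.range k,
            (c (i+1) * φ^(i+1) / (Nat.factorial (i+1))) * (u^(i+1) * G u)) := by
          simp_rw [hpt]
      _ = (∫ u in Icc A B, G u * r u) + ∑ i ∈ Finset.range k,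
            ∫ u in Icc A B, (c (i+1) * φ^(i+1) / (Nat.factorial (i+1))) * (u^(i+1) * G u) := by
          rw [integral_add I1 Isum, integral_finset_sum _ (fun i _ => (I2 i).const_mul _)]
      _ = ∫ u in Icc A B, G u * r u := by
          have : ∀ i ∈ Finset.range k,
              ∫ u in Icc A B, (c (i+1) * φ^(i+1) / (Nat.factorial (i+1))) * (u^(i+1) * G u) = 0 := by
            intro i hi
            rw [MeasureTheory.integral_const_mul, hzero i hi, mul_zero]
          rw [Finset.sum_congr rfl this, Finset.sum_const_zero, add_zero]
  set I := ∫ u in Icc A B, |G u| * |u|^(k+1) with hIdef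
  have hI0 : 0 ≤ I := integral_nonneg (fun u => by positivity)
  have hB1 : |∫ u in Icc A B, G u * r u| ≤ K * I := by
    have h1 : |∫ u in Icc A B, G u * r u| ≤ ∫ u in Icc A B, |G u * r u| := by
      have := norm_integral_le_integral_norm (μ := volume.restrict (Icc A B)) (fun u => G u * r u)
      simpa only [Real.norm_eq_abs] using this
    have h2 : ∫ u in Icc A B, |G u * r u| ≤ ∫ u in Icc A B, K * (|G u| * |u|^(k+1)) := by
      refine setIntegral_mono_on I1.abs (I3.const_mul K) hs ?_
      intro u hu
      rw [abs_mul]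
      calc |G u| * |r u| ≤ |G u| * (K * |u|^(k+1)) :=
            mul_le_mul_of_nonneg_left (hrb u hu) (abs_nonneg _)
        _ = K * (|G u| * |u|^(k+1)) := by ring
    rw [MeasureTheory.integral_const_mul] at h2
    exact h1.trans h2
  -- Cauchy-Schwarz
  set f2 : ℝ → ℝ := fun u => |G u| * |u|^(k+1) with hf2def
  have hf2m : AEStronglyMeasurable f2 (volume.restrict (Icc A B)) := I3.aestronglyMeasurable
  have hf2Lp : MemLp f2 (ENNReal.ofReal 2) (volume.restrict (Icc A B)) := by
    refine MemLp.of_bound hf2m (M * D) ?_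
    refine ae_restrict_of_forall_mem hs (fun u hu => ?_)
    rw [hf2def]
    simp only [Real.norm_eq_abs, abs_mul, abs_abs, abs_pow]
    exact mul_le_mul (hM u) (huD u hu) (by positivity) hM0
  have hgLp : MemLp (fun _ : ℝ => (1:ℝ)) (ENNReal.ofReal 2) (volume.restrict (Icc A B)) :=
    memLp_const 1
  have hpq : Real.HolderConjugate 2 2 := ⟨by norm_num, by norm_num, by norm_num⟩
  have hold := integral_mul_le_Lp_mul_Lq_of_nonneg hpq
    (ae_of_all _ (fun u => by positivity : ∀ u : ℝ, 0 ≤ f2 u))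
    (ae_of_all _ (fun _ => zero_le_one)) hf2Lp hgLp
  simp only [mul_one, Real.rpow_two, one_pow] at hold
  have hBA0 : (0:ℝ) ≤ B - A := by linarith
  have hvol : ∫ _ in Icc A B, (1:ℝ) = B - A := by
    rw [MeasureTheory.integral_const, measureReal_def, Measure.restrict_apply_univ, Real.volume_Icc,
      ENNReal.toReal_ofReal hBA0, smul_eq_mul, mul_one]
  rw [hvol] at hold
  set P := ∫ u in Icc A B, f2 u ^ 2 with hPdef
  have hP0 : 0 ≤ P := integral_nonneg (fun u => by positivity)
  have hhalf : ∀ x : ℝ, 0 ≤ x → (x ^ ((1:ℝ)/2))^(2:ℕ) = x := by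
    intro x hx
    rw [← Real.rpow_natCast (x ^ ((1:ℝ)/2)) 2, ← Real.rpow_mul hx]
    norm_num
  have hIsq : I^2 ≤ P * (B - A) := by
    calc I^2 ≤ (P ^ ((1:ℝ)/2) * (B - A) ^ ((1:ℝ)/2))^2 := by
          apply pow_le_pow_left₀ hI0
          exact hold
      _ = P * (B - A) := by
          rw [mul_pow, hhalf P hP0, hhalf (B - A) hBA0]
  have hsq : ∀ u : ℝ, f2 u ^ 2 = G u ^ 2 * u ^ (2*(k+1)) := by
    intro u
    rw [hf2def]
    simp only
    rw [mul_pow, sq_abs, ← abs_pow, sq_abs, ← pow_mul, Nat.mul_comm]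
  have hPQ : P = ∫ u, G u ^ 2 * u ^ (2*(k+1)) := by
    rw [hPdef]
    simp_rw [hsq]
    exact setIntegral_eq_integral_of_forall_compl_eq_zero
      (fun u hu => by rw [hG_supp u hu]; ring)
  have hE : |∫ u, G u * (J (t + φ * u) - J t)| ≤ K * I := by
    rw [hA1, hA2]
    exact hB1
  calc |∫ u, G u * (J (t + φ * u) - J t)| ^ 2 ≤ (K * I)^2 :=
        pow_le_pow_left₀ (abs_nonneg _) hE 2
    _ = K^2 * I^2 := by rw [mul_pow]
    _ ≤ K^2 * (P * (B - A)) := mul_le_mul_of_nonneg_left hIsq (by positivity)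
    _ = L1 ^ 2 * (B - A) / (Nat.factorial k) ^ 2 * φ ^ (2 * (k + 1)) *
          ∫ u, G u ^ 2 * u ^ (2 * (k + 1)) := by
        rw [← hPQ, hK, show φ ^ (2*(k+1)) = (φ^(k+1))^2 from pow_mul' φ 2 (k+1)]
        ring
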